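/- Define the dominance order on bipartitions of n by (λ,μ) ⊴ (λ',μ') iff Σ_{i≤d} λ_i ≤ Σ_{i≤d} λ'_i for all d and |λ| + Σ_{i≤d} μ_i ≤ |λ'| + Σ_{i≤d} μ'_i for all d. Then (λ,μ) ⊴ (λ',μ') if and only if λ ⊴ λ' and μ̄' ⊴ μ̄, where ⊴ between partitions of possibly different numbers means all partial sums of the first are at most those of the second, and μ̄ denotes the conjugate of μ. -/

import Mathlib

/-- Partial sum of the first `d` parts of a partition (given as a function). -/
def psum (f : ℕ → ℕ) (d : ℕ) : ℕ := ∑ i ∈ Finset.range d, f i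

/-- Dominance order between partitions of possibly different numbers:
all partial sums of the first are at most those of the second. -/
def Dom (f g : ℕ → ℕ) : Prop := ∀ d, psum f d ≤ psum g d

/-- Conjugate partition: (conj f) j = #{i : f i ≥ j+1}  (0-indexed parts). -/
noncomputable def conj (f : ℕ → ℕ) (j : ℕ) : ℕ := Set.ncard {i | j < f i}


lemma finsum_eq_range (f : ℕ → ℕ) (N : ℕ) (h : ∀ i, N ≤ i → f i = 0) :
    ∑ᶠ i, f i = ∑ i ∈ Finset.range N, f i := by
  apply finsum_eq_sum_of_support_subset
  intro i hi
  simp only [Function.mem_support] at hi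
  simp only [Finset.coe_range, Set.mem_Iio]
  by_contra hc
  exact hi (h i (le_of_not_gt hc))

lemma conj_eq (f : ℕ → ℕ) (N : ℕ) (h : ∀ i, N ≤ i → f i = 0) (k : ℕ) :
    conj f k = ((Finset.range N).filter (fun i => k < f i)).card := by
  rw [conj, ← Set.ncard_coe_finset]
  congr 1
  ext i
  simp only [Set.mem_setOf_eq, Finset.coe_filter, Finset.mem_range]
  constructor
  · intro hi
    refine ⟨?_, hi⟩
    by_contra hc
    rw [h i (le_of_not_gt hc)] at hi; omega
  · exact fun hi => hi.2

lemma conj_lt_iff (f : ℕ → ℕ) (N : ℕ) (hf : Antitone f) (h : ∀ i, N ≤ i → f i = 0)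
    (k i : ℕ) : i < conj f k ↔ k < f i := by
  rw [conj_eq f N h k]
  constructor
  · intro hi
    by_contra hc
    push_neg at hc
    have hsub : (Finset.range N).filter (fun i => k < f i) ⊆ Finset.range i := by
      intro j hj
      simp only [Finset.mem_filter, Finset.mem_range] at hj ⊢
      by_contra hji
      exact absurd (lt_of_lt_of_le hj.2 (le_trans (hf (le_of_not_gt hji)) hc)) (lt_irrefl k)
    have := Finset.card_le_card hsub
    simp [Finset.card_range] at this; omega
  · intro hi
    have hsub : Finset.range (i+1) ⊆ (Finset.range N).filter (fun i => k < f i) := by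
      intro j hj
      simp only [Finset.mem_range] at hj
      have hfj : k < f j := lt_of_lt_of_le hi (hf (by omega))
      simp only [Finset.mem_filter, Finset.mem_range]
      refine ⟨?_, hfj⟩
      by_contra hc
      rw [h j (le_of_not_gt hc)] at hfj; omega
    have := Finset.card_le_card hsub
    simpa [Finset.card_range] using this

lemma psum_conj (f : ℕ → ℕ) (N : ℕ) (h : ∀ i, N ≤ i → f i = 0) (k : ℕ) :
    psum (conj f) k = ∑ i ∈ Finset.range N, min (f i) k := by
  unfold psum
  have : ∀ j, conj f j = ∑ i ∈ Finset.range N, (if j < f i then 1 else 0) := by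
    intro j; rw [conj_eq f N h j, Finset.card_filter]
  simp_rw [this]
  rw [Finset.sum_comm]
  apply Finset.sum_congr rfl
  intro i _
  rw [← Finset.card_filter]
  have : (Finset.range k).filter (fun j => j < f i) = Finset.range (min (f i) k) := by
    ext j; simp [Nat.lt_min, and_comm]
  rw [this, Finset.card_range]

lemma split_sum (f : ℕ → ℕ) (N k : ℕ) :
    ∑ i ∈ Finset.range N, f i
      = (∑ i ∈ Finset.range N, min (f i) k) + ∑ i ∈ Finset.range N, (f i - k) := by
  rw [← Finset.sum_add_distrib]
  apply Finset.sum_congr rfl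
  intro i _; omega

lemma sum_le_trunc (f : ℕ → ℕ) (d N k : ℕ) (hdN : d ≤ N) :
    psum f d ≤ (∑ i ∈ Finset.range N, (f i - k)) + d * k := by
  calc psum f d ≤ ∑ i ∈ Finset.range d, ((f i - k) + k) :=
        Finset.sum_le_sum (fun i _ => by omega)
    _ = (∑ i ∈ Finset.range d, (f i - k)) + d * k := by
        rw [Finset.sum_add_distrib, Finset.sum_const, Finset.card_range, smul_eq_mul]
    _ ≤ (∑ i ∈ Finset.range N, (f i - k)) + d * k := by
        exact Nat.add_le_add_right (Finset.sum_le_sum_of_subset (Finset.range_subset_range.mpr hdN)) _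

lemma trunc_eq (f : ℕ → ℕ) (d N k : ℕ) (hdN : d ≤ N)
    (h1 : ∀ i, i < d → k ≤ f i) (h2 : ∀ i, d ≤ i → f i ≤ k) :
    psum f d = (∑ i ∈ Finset.range N, (f i - k)) + d * k := by
  have e1 : ∑ i ∈ Finset.range N, (f i - k) = ∑ i ∈ Finset.range d, (f i - k) := by
    symm
    apply Finset.sum_subset (Finset.range_subset_range.mpr hdN)
    intro i _ hi
    simp only [Finset.mem_range] at hi
    have := h2 i (le_of_not_gt hi); omega
  rw [e1]
  calc psum f d = ∑ i ∈ Finset.range d, ((f i - k) + k) := by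
        apply Finset.sum_congr rfl
        intro i hi
        simp only [Finset.mem_range] at hi
        have := h1 i hi; omega
    _ = (∑ i ∈ Finset.range d, (f i - k)) + d * k := by
        rw [Finset.sum_add_distrib, Finset.sum_const, Finset.card_range, smul_eq_mul]

/-- Dominance order on bipartitions (Dipper–James–Murphy). -/
noncomputable def BDom (l m l' m' : ℕ → ℕ) : Prop :=
  (∀ d, psum l d ≤ psum l' d) ∧
  ∀ d, (∑ᶠ i, l i) + psum m d ≤ (∑ᶠ i, l' i) + psum m' d

theorem bipartition_dominance_iff (n : ℕ) (l m l' m' : ℕ → ℕ)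
    (hl : Antitone l) (hm : Antitone m) (hl' : Antitone l') (hm' : Antitone m')
    (hl0 : ∃ N, ∀ i, N ≤ i → l i = 0) (hm0 : ∃ N, ∀ i, N ≤ i → m i = 0)
    (hl'0 : ∃ N, ∀ i, N ≤ i → l' i = 0) (hm'0 : ∃ N, ∀ i, N ≤ i → m' i = 0)
    (hn : (∑ᶠ i, l i) + (∑ᶠ i, m i) = n)
    (hn' : (∑ᶠ i, l' i) + (∑ᶠ i, m' i) = n) :
    BDom l m l' m' ↔ (Dom l l' ∧ Dom (conj m') (conj m)) := by
  obtain ⟨Nm, hNm⟩ := hm0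
  obtain ⟨Nm', hNm'⟩ := hm'0
  have hsum : (∑ᶠ i, l i) + (∑ᶠ i, m i) = (∑ᶠ i, l' i) + (∑ᶠ i, m' i) := by rw [hn, hn']
  constructor
  · rintro ⟨h1, h2⟩
    refine ⟨h1, fun k => ?_⟩
    set N := max Nm Nm' with hN
    have hmz : ∀ i, N ≤ i → m i = 0 := fun i hi => hNm i (le_trans (le_max_left _ _) hi)
    have hm'z : ∀ i, N ≤ i → m' i = 0 := fun i hi => hNm' i (le_trans (le_max_right _ _) hi)
    have hB : ∑ᶠ i, m i = psum (conj m) k + ∑ i ∈ Finset.range N, (m i - k) := by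
      rw [finsum_eq_range m N hmz, psum_conj m N hmz k]
      exact split_sum m N k
    have hB' : ∑ᶠ i, m' i = psum (conj m') k + ∑ i ∈ Finset.range N, (m' i - k) := by
      rw [finsum_eq_range m' N hm'z, psum_conj m' N hm'z k]
      exact split_sum m' N k
    set D := conj m k with hD
    have hiff : ∀ i, i < D ↔ k < m i := conj_lt_iff m N hm hmz k
    have hDN : D ≤ N := by
      by_contra hc
      push_neg at hc
      have := (hiff N).mp hc
      rw [hmz N le_rfl] at this
      omega
    have e1 : psum m D = (∑ i ∈ Finset.range N, (m i - k)) + D * k :=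
      trunc_eq m D N k hDN (fun i hi => le_of_lt ((hiff i).mp hi))
        (fun i hi => le_of_not_gt (fun hc => absurd ((hiff i).mpr hc) (by omega)))
    have e2 : psum m' D ≤ (∑ i ∈ Finset.range N, (m' i - k)) + D * k :=
      sum_le_trunc m' D N k hDN
    have h2D := h2 D
    set c := D * k
    omega
  · rintro ⟨h1, h2⟩
    refine ⟨h1, fun d => ?_⟩
    set N := max (max Nm Nm') d with hN
    have hmz : ∀ i, N ≤ i → m i = 0 :=
      fun i hi => hNm i (le_trans (le_trans (le_max_left _ _) (le_max_left _ _)) hi)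
    have hm'z : ∀ i, N ≤ i → m' i = 0 :=
      fun i hi => hNm' i (le_trans (le_trans (le_max_right _ _) (le_max_left _ _)) hi)
    have hdN : d ≤ N := le_max_right _ _
    set k := m' d with hk
    have hB : ∑ᶠ i, m i = psum (conj m) k + ∑ i ∈ Finset.range N, (m i - k) := by
      rw [finsum_eq_range m N hmz, psum_conj m N hmz k]
      exact split_sum m N k
    have hB' : ∑ᶠ i, m' i = psum (conj m') k + ∑ i ∈ Finset.range N, (m' i - k) := by
      rw [finsum_eq_range m' N hm'z, psum_conj m' N hm'z k]
      exact split_sum m' N k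
    have e1 : psum m' d = (∑ i ∈ Finset.range N, (m' i - k)) + d * k :=
      trunc_eq m' d N k hdN (fun i hi => hm' (le_of_lt hi)) (fun i hi => hm' hi)
    have e2 : psum m d ≤ (∑ i ∈ Finset.range N, (m i - k)) + d * k :=
      sum_le_trunc m d N k hdN
    have h2k := h2 k
    set c := d * k
    omega
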